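/- For any period n, cycle length a ≥ 1 with n + a ≤ T, and every real y, the averaged cumulative distribution functions of accumulated demands satisfy (1/a) · Σ_{k=1}^{a} φ_{n,k}(y) ≥ (1/(a+1)) · Σ_{k=1}^{a+1} φ_{n,k}(y). -/

import Mathlib

open MeasureTheory ProbabilityTheory

/-- Accumulated demand `ξ_{n,k} = ξ_n + ⋯ + ξ_{n+k-1}`. -/
noncomputable def acc {Ω : Type*} (ξ : ℕ → Ω → ℝ) (n k : ℕ) (ω : Ω) : ℝ :=
  ∑ i ∈ Finset.range k, ξ (n + i) ω

/-- Cumulative distribution function `φ_{n,k}(y) = P(ξ_{n,k} ≤ y)` of accumulated demand. -/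
noncomputable def cdf {Ω : Type*} [MeasurableSpace Ω] (μ : Measure Ω) (ξ : ℕ → Ω → ℝ)
    (n k : ℕ) (y : ℝ) : ℝ :=
  (μ {ω | acc ξ n k ω ≤ y}).toReal

/-- Multi-period cost function
`L_{n,a}(y) = Σ_{k=1}^{a} (h·E[(y − ξ_{n,k})⁺] + p·E[(ξ_{n,k} − y)⁺])`. -/
noncomputable def Lmp {Ω : Type*} [MeasurableSpace Ω] (μ : Measure Ω) (h p : ℝ)
    (ξ : ℕ → Ω → ℝ) (n a : ℕ) (y : ℝ) : ℝ :=
  ∑ k ∈ Finset.Icc 1 a,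
    (h * ∫ ω, max (y - acc ξ n k ω) 0 ∂μ + p * ∫ ω, max (acc ξ n k ω - y) 0 ∂μ)

lemma cdf_succ_le {Ω : Type*} [MeasurableSpace Ω] (μ : Measure Ω) [IsProbabilityMeasure μ]
    (ξ : ℕ → Ω → ℝ) (hpos : ∀ i, ∀ᵐ ω ∂μ, 0 ≤ ξ i ω) (n k : ℕ) (y : ℝ) :
    _root_.cdf μ ξ n (k + 1) y ≤ _root_.cdf μ ξ n k y := by
  unfold _root_.cdf
  apply ENNReal.toReal_mono (measure_ne_top μ _)
  apply measure_mono_ae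
  filter_upwards [hpos (n + k)] with ω hω hmem
  replace hmem : acc ξ n (k + 1) ω ≤ y := hmem
  show acc ξ n k ω ≤ y
  have : acc ξ n (k + 1) ω = acc ξ n k ω + ξ (n + k) ω := by
    simp [acc, Finset.sum_range_succ]
  linarith

lemma cdf_anti {Ω : Type*} [MeasurableSpace Ω] (μ : Measure Ω) [IsProbabilityMeasure μ]
    (ξ : ℕ → Ω → ℝ) (hpos : ∀ i, ∀ᵐ ω ∂μ, 0 ≤ ξ i ω) (n : ℕ) (y : ℝ) {k m : ℕ}
    (hkm : k ≤ m) : _root_.cdf μ ξ n m y ≤ _root_.cdf μ ξ n k y := by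
  induction m with
  | zero => interval_cases k; exact le_refl _
  | succ m ih =>
    rcases Nat.lt_or_ge k (m + 1) with h | h
    · exact le_trans (cdf_succ_le μ ξ hpos n m y) (ih (by omega))
    · have : k = m + 1 := by omega
      simp [this]

/-- Proposition 1(b): the averaged cumulative distribution functions of accumulated
demands satisfy `(1/a)·Σ_{k=1}^{a} φ_{n,k}(y) ≥ (1/(a+1))·Σ_{k=1}^{a+1} φ_{n,k}(y)`. -/
theorem stmt1 {Ω : Type*} [MeasurableSpace Ω] (μ : Measure Ω) [IsProbabilityMeasure μ]
    (T : ℕ) (ξ : ℕ → Ω → ℝ)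
    (hmeas : ∀ i, Measurable (ξ i)) (hint : ∀ i, Integrable (ξ i) μ)
    (hpos : ∀ i, ∀ᵐ ω ∂μ, 0 ≤ ξ i ω)
    (hind : iIndepFun ξ μ)
    (n a : ℕ) (hn : 1 ≤ n) (ha : 1 ≤ a) (hna : n + a ≤ T) (y : ℝ) :
    (1 / ((a : ℝ) + 1)) * ∑ k ∈ Finset.Icc 1 (a + 1), cdf μ ξ n k y ≤
      (1 / (a : ℝ)) * ∑ k ∈ Finset.Icc 1 a, cdf μ ξ n k y := by
  have ha0 : (0 : ℝ) < (a : ℝ) := by exact_mod_cast ha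
  have ha1 : (0 : ℝ) < (a : ℝ) + 1 := by linarith
  have hsum : ∑ k ∈ Finset.Icc 1 (a + 1), cdf μ ξ n k y =
      (∑ k ∈ Finset.Icc 1 a, cdf μ ξ n k y) + cdf μ ξ n (a + 1) y := by
    rw [← Finset.sum_Icc_succ_top (by omega)]
  have hlast : (a : ℝ) * cdf μ ξ n (a + 1) y ≤ ∑ k ∈ Finset.Icc 1 a, cdf μ ξ n k y := by
    calc (a : ℝ) * cdf μ ξ n (a + 1) y
        = ∑ _k ∈ Finset.Icc 1 a, cdf μ ξ n (a + 1) y := by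
          rw [Finset.sum_const, Nat.card_Icc]; simp [nsmul_eq_mul]
      _ ≤ ∑ k ∈ Finset.Icc 1 a, cdf μ ξ n k y := by
          apply Finset.sum_le_sum
          intro k hk
          exact cdf_anti μ ξ hpos n y (by simp at hk; omega)
  rw [hsum, div_mul_eq_mul_div, div_mul_eq_mul_div, div_le_div_iff₀ ha1 ha0]
  nlinarith [hlast]
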